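/- arXiv:1612.00680 — 3 statements merged into one kernel-verified Lean document; each statement's English description precedes it below -/
import Mathlib

section
/- Let λ > 0, σ ∈ ℝ, and let ω ∈ C₀(ℝ,ℝ) satisfy the sublinear growth condition lim_{|t|→∞} ω(t)/t = 0 (law of the iterated logarithm regime). Define R(ω) = sup_{t≥0} exp(−(λ + σ²/2)t + σ·ω(t)). Then for every γ > 0, sup_{τ∈ℝ} e^{−γ|τ|} R(θ_τ ω) < ∞, where θ_τ ω(t) = ω(t+τ) − ω(τ); i.e. R is tempered along this trajectory. -/
open Real

lemma sublin_bound (ω : ℝ → ℝ) (hc : Continuous ω)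
    (ht : Filter.Tendsto (fun t : ℝ => ω t / t) Filter.atTop (nhds 0))
    (hb : Filter.Tendsto (fun t : ℝ => ω t / t) Filter.atBot (nhds 0))
    (ε : ℝ) (hε : 0 < ε) :
    ∃ C : ℝ, 0 ≤ C ∧ ∀ s : ℝ, |ω s| ≤ C + ε * |s| := by
  have h1 : ∀ᶠ t : ℝ in Filter.atTop, |ω t| / |t| < ε := by
    have h := ht
    rw [Metric.tendsto_nhds] at h
    simpa [Real.dist_eq] using h ε hε
  have h2 : ∀ᶠ t : ℝ in Filter.atBot, |ω t| / |t| < ε := by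
    have h := hb
    rw [Metric.tendsto_nhds] at h
    simpa [Real.dist_eq] using h ε hε
  obtain ⟨N, hN⟩ := Filter.eventually_atTop.mp h1
  obtain ⟨N', hN'⟩ := Filter.eventually_atBot.mp h2
  set M : ℝ := max N 1 with hM
  set m : ℝ := min N' (-1) with hm
  obtain ⟨C0, hC0⟩ := (isCompact_Icc : IsCompact (Set.Icc m M)).exists_bound_of_continuousOn
    hc.continuousOn
  refine ⟨max C0 0, le_max_right _ _, fun s => ?_⟩
  by_cases hs : s ∈ Set.Icc m M
  · have h := hC0 s hs
    rw [Real.norm_eq_abs] at h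
    nlinarith [mul_nonneg hε.le (abs_nonneg s), le_max_left C0 0]
  · have hkey : |ω s| / |s| < ε ∧ s ≠ 0 := by
      rcases le_or_gt s M with h | h
      · have hsm : s < m := by
          by_contra hsm
          exact hs ⟨le_of_not_gt hsm, h⟩
        have hs0 : s < 0 := lt_of_lt_of_le hsm (le_trans (min_le_right _ _) (by norm_num))
        exact ⟨hN' s (le_trans hsm.le (min_le_left _ _)), ne_of_lt hs0⟩
      · have hs0 : 0 < s := lt_of_lt_of_le (by norm_num : (0:ℝ) < 1)
          (le_trans (le_max_right N 1) h.le)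
        exact ⟨hN s (le_trans (le_max_left N 1) h.le), ne_of_gt hs0⟩
    obtain ⟨hlt, hne⟩ := hkey
    have heq : |ω s| = |ω s| / |s| * |s| := by
      rw [div_mul_cancel₀ _ (abs_ne_zero.mpr hne)]
    have : |ω s| ≤ ε * |s| := by
      rw [heq]
      exact mul_le_mul_of_nonneg_right hlt.le (abs_nonneg s)
    nlinarith [le_max_right C0 0]

lemma exp_arith (σ β γ ε C τ t wτt wτ : ℝ) (ht0 : 0 ≤ t) (hε : 0 ≤ ε)
    (hσε : 2 * |σ| * ε ≤ γ) (hσε' : 2 * |σ| * ε ≤ β)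
    (h1 : |wτt| ≤ C + ε * |t + τ|) (h2 : |wτ| ≤ C + ε * |τ|) :
    -β * t + σ * (wτt - wτ) ≤ γ * |τ| + 2 * |σ| * C := by
  have hσ : σ * (wτt - wτ) ≤ |σ| * |wτt| + |σ| * |wτ| := by
    calc σ * (wτt - wτ) ≤ |σ * (wτt - wτ)| := le_abs_self _
      _ = |σ| * |wτt - wτ| := abs_mul _ _
      _ ≤ |σ| * (|wτt| + |wτ|) :=
          mul_le_mul_of_nonneg_left (abs_sub _ _) (abs_nonneg σ)
      _ = |σ| * |wτt| + |σ| * |wτ| := by ring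
  have habs : |t + τ| ≤ t + |τ| := by
    calc |t + τ| ≤ |t| + |τ| := abs_add_le _ _
      _ = t + |τ| := by rw [abs_of_nonneg ht0]
  have e1 : |σ| * |wτt| ≤ |σ| * C + |σ| * ε * (t + |τ|) := by
    have := mul_le_mul_of_nonneg_left h1 (abs_nonneg σ)
    nlinarith [mul_le_mul_of_nonneg_left habs (mul_nonneg (abs_nonneg σ) hε)]
  have e2 : |σ| * |wτ| ≤ |σ| * C + |σ| * ε * |τ| := by
    nlinarith [mul_le_mul_of_nonneg_left h2 (abs_nonneg σ)]
  nlinarith [mul_le_mul_of_nonneg_right hσε' ht0,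
    mul_le_mul_of_nonneg_right hσε (abs_nonneg τ),
    mul_nonneg (mul_nonneg (abs_nonneg σ) hε) ht0]


/-- Let `λ > 0`, `σ ∈ ℝ` and let `ω : ℝ → ℝ` be a continuous path with
`ω 0 = 0` and `ω(t)/t → 0` as `t → ±∞`. Then
`R(θ_τ ω) = sup_{t ≥ 0} exp(-(λ + σ²/2)t + σ(ω(t+τ) - ω(τ)))` is finite for
each `τ`, and for every `γ > 0` the family `e^{-γ|τ|} R(θ_τ ω)`, `τ ∈ ℝ`, is
bounded above: `R` is tempered along this trajectory. -/
theorem geometric_sup_tempered (l σ : ℝ) (hl : 0 < l)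
    (ω : ℝ → ℝ) (hωcont : Continuous ω) (hω0 : ω 0 = 0)
    (hωtop : Filter.Tendsto (fun t : ℝ => ω t / t) Filter.atTop (nhds 0))
    (hωbot : Filter.Tendsto (fun t : ℝ => ω t / t) Filter.atBot (nhds 0)) :
    (∀ τ : ℝ, BddAbove (Set.range fun t : Set.Ici (0 : ℝ) =>
        Real.exp (-(l + σ ^ 2 / 2) * (t : ℝ) + σ * (ω ((t : ℝ) + τ) - ω τ)))) ∧
    (∀ γ : ℝ, 0 < γ →
      BddAbove (Set.range fun τ : ℝ => Real.exp (-γ * |τ|) *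
        ⨆ t : Set.Ici (0 : ℝ),
          Real.exp (-(l + σ ^ 2 / 2) * (t : ℝ) + σ * (ω ((t : ℝ) + τ) - ω τ)))) := by
  have hβ : 0 < l + σ ^ 2 / 2 := by positivity
  set β := l + σ ^ 2 / 2 with hβdef
  haveI : Nonempty (Set.Ici (0 : ℝ)) := ⟨⟨0, Set.self_mem_Ici⟩⟩
  constructor
  · intro τ
    have hεpos : 0 < β / (2 * (2 * |σ| + 1)) := by positivity
    obtain ⟨C, hC0, hC⟩ := sublin_bound ω hωcont hωtop hωbot _ hεpos
    set ε := β / (2 * (2 * |σ| + 1)) with hεdef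
    have hεD : ε * (2 * (2 * |σ| + 1)) = β := by
      rw [hεdef]; field_simp
    have hσε : 2 * |σ| * ε ≤ β := by
      nlinarith [mul_nonneg (abs_nonneg σ) hεpos.le, hεpos.le]
    refine ⟨Real.exp (β * |τ| + 2 * |σ| * C), ?_⟩
    rintro x ⟨t, rfl⟩
    exact Real.exp_le_exp.mpr (exp_arith σ β β ε C τ t _ _ t.2 hεpos.le hσε hσε
      (hC _) (hC _))
  · intro γ hγ
    have hεpos : 0 < min γ β / (2 * (2 * |σ| + 1)) := by positivity
    obtain ⟨C, hC0, hC⟩ := sublin_bound ω hωcont hωtop hωbot _ hεpos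
    set ε := min γ β / (2 * (2 * |σ| + 1)) with hεdef
    have hεD : ε * (2 * (2 * |σ| + 1)) = min γ β := by
      rw [hεdef]; field_simp
    have hσεm : 2 * |σ| * ε ≤ min γ β := by
      nlinarith [mul_nonneg (abs_nonneg σ) hεpos.le, hεpos.le]
    have hσεγ : 2 * |σ| * ε ≤ γ := le_trans hσεm (min_le_left _ _)
    have hσεβ : 2 * |σ| * ε ≤ β := le_trans hσεm (min_le_right _ _)
    refine ⟨Real.exp (2 * |σ| * C), ?_⟩
    rintro x ⟨τ, rfl⟩
    have hsup : (⨆ t : Set.Ici (0 : ℝ),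
        Real.exp (-β * (t : ℝ) + σ * (ω ((t : ℝ) + τ) - ω τ))) ≤
        Real.exp (γ * |τ| + 2 * |σ| * C) :=
      ciSup_le fun t => Real.exp_le_exp.mpr
        (exp_arith σ β γ ε C τ t _ _ t.2 hεpos.le hσεγ hσεβ (hC _) (hC _))
    calc Real.exp (-γ * |τ|) * _ ≤
        Real.exp (-γ * |τ|) * Real.exp (γ * |τ| + 2 * |σ| * C) :=
          mul_le_mul_of_nonneg_left hsup (Real.exp_nonneg _)
      _ = Real.exp (2 * |σ| * C) := by rw [← Real.exp_add]; congr 1; ring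
end

section
/- Let V be a normed vector space, V₊ ⊆ V a solid normal cone, and let (x_α)_{α∈Λ} be a net in V converging to x_∞ ∈ V. Suppose that for each α the infimum x_α⁻ = inf{x_{α'} : α' ≥ α} and the supremum x_α⁺ = sup{x_{α'} : α' ≥ α} exist (with respect to the partial order induced by V₊). Then the nets (x_α⁻) and (x_α⁺) also converge to x_∞. -/
private lemma aux_tail_inf_tendsto
    {V : Type*} [NormedAddCommGroup V] [NormedSpace ℝ V]
    (K : Set V) (hconv : Convex ℝ K)
    (hsmul : ∀ a : ℝ, 0 ≤ a → ∀ x ∈ K, a • x ∈ K)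
    (hsolid : (interior K).Nonempty)
    (c : ℝ) (hc : 0 < c)
    (hnormal : ∀ x y : V, x ∈ K → y - x ∈ K → ‖x‖ ≤ c * ‖y‖)
    {Λ : Type*} [Nonempty Λ] [SemilatticeSup Λ]
    (x : Λ → V) (xlim : V)
    (hx : Filter.Tendsto x Filter.atTop (nhds xlim))
    (xm : Λ → V)
    (hxm : ∀ α : Λ, (∀ α' : Λ, α ≤ α' → x α' - xm α ∈ K) ∧
      ∀ w : V, (∀ α' : Λ, α ≤ α' → x α' - w ∈ K) → xm α - w ∈ K) :
    Filter.Tendsto xm Filter.atTop (nhds xlim) := by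
  obtain ⟨e, he⟩ := hsolid
  obtain ⟨r, hr, hball⟩ := Metric.mem_nhds_iff.mp (mem_interior_iff_mem_nhds.mp he)
  have hK : ∀ z : V, ‖z‖ < r → e + z ∈ K := by
    intro z hz
    exact hball (by simpa [Metric.mem_ball, dist_eq_norm] using hz)
  have hadd : ∀ a ∈ K, ∀ b ∈ K, a + b ∈ K := by
    intro a ha b hb
    have h := hconv ha hb (by norm_num : (0:ℝ) ≤ 1/2) (by norm_num : (0:ℝ) ≤ 1/2)
      (by norm_num)
    have h2 := hsmul 2 (by norm_num) _ h
    have : (2:ℝ) • ((1/2:ℝ) • a + (1/2:ℝ) • b) = a + b := by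
      rw [smul_add, smul_smul, smul_smul]; norm_num
    rwa [this] at h2
  have hscale : ∀ t : ℝ, 0 < t → ∀ z : V, ‖z‖ < t * r → t • e + z ∈ K := by
    intro t ht z hz
    have h1 : e + t⁻¹ • z ∈ K := by
      apply hK
      rw [norm_smul, norm_inv, Real.norm_eq_abs, abs_of_pos ht]
      rw [inv_mul_lt_iff₀ ht]
      exact hz
    have h2 := hsmul t ht.le _ h1
    rw [smul_add, smul_smul, mul_inv_cancel₀ ht.ne', one_smul] at h2
    exact h2
  rw [NormedAddCommGroup.tendsto_atTop] at hx ⊢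
  intro ε hε
  set D : ℝ := (2 * c + 1) * ‖e‖ + 1 with hDdef
  have hD : 0 < D := by positivity
  set t : ℝ := ε / D with htdef
  have ht : 0 < t := div_pos hε hD
  obtain ⟨N, hN⟩ := hx (t * r) (mul_pos ht hr)
  refine ⟨N, fun α hα => ?_⟩
  have h1 : xm α - (xlim - t • e) ∈ K := by
    apply (hxm α).2
    intro α' hα'
    have := hscale t ht (x α' - xlim) (hN α' (le_trans hα hα'))
    have heq : x α' - (xlim - t • e) = t • e + (x α' - xlim) := by abel
    rwa [heq]
  have h2 : x α - xm α ∈ K := (hxm α).1 α le_rfl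
  have h3 : t • e - (x α - xlim) ∈ K := by
    have := hscale t ht (-(x α - xlim)) (by rw [norm_neg]; exact hN α hα)
    rwa [← sub_eq_add_neg] at this
  have h4 : (2 * t) • e - (xm α - (xlim - t • e)) ∈ K := by
    have h := hadd _ h3 _ h2
    have heq : t • e - (x α - xlim) + (x α - xm α)
        = (2 * t) • e - (xm α - (xlim - t • e)) := by
      rw [two_mul, add_smul]; abel
    rwa [heq] at h
  have h5 : ‖xm α - (xlim - t • e)‖ ≤ c * ‖(2 * t) • e‖ := hnormal _ _ h1 h4
  have hnorm2 : ‖(2 * t) • e‖ = 2 * t * ‖e‖ := by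
    rw [norm_smul, Real.norm_eq_abs, abs_of_pos (by linarith)]
  have htri : ‖xm α - xlim‖ ≤ ‖xm α - (xlim - t • e)‖ + ‖t • e‖ := by
    have heq : xm α - xlim = (xm α - (xlim - t • e)) + (-(t • e)) := by abel
    rw [heq]
    calc ‖xm α - (xlim - t • e) + -(t • e)‖
        ≤ ‖xm α - (xlim - t • e)‖ + ‖-(t • e)‖ := norm_add_le _ _
      _ = ‖xm α - (xlim - t • e)‖ + ‖t • e‖ := by rw [norm_neg]
  have hte : ‖t • e‖ = t * ‖e‖ := by
    rw [norm_smul, Real.norm_eq_abs, abs_of_pos ht]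
  have hbound : ‖xm α - xlim‖ ≤ t * ((2 * c + 1) * ‖e‖) := by
    calc ‖xm α - xlim‖ ≤ ‖xm α - (xlim - t • e)‖ + ‖t • e‖ := htri
      _ ≤ c * (2 * t * ‖e‖) + t * ‖e‖ := by rw [hte]; rw [hnorm2] at h5; linarith
      _ = t * ((2 * c + 1) * ‖e‖) := by ring
  have hlt : t * ((2 * c + 1) * ‖e‖) < t * D := by
    apply mul_lt_mul_of_pos_left _ ht
    rw [hDdef]; linarith
  have htD : t * D = ε := div_mul_cancel₀ ε hD.ne'
  linarith

/-- Let `V` be a normed space with a solid normal cone `K`, inducing the order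
`x ≤ y ↔ y - x ∈ K`. If a net `(x_α)` (indexed by a directed set `Λ`) converges
to `xlim` and for each `α` the tail infimum `xm α` and tail supremum `xp α` exist
in this order, then the nets `(xm α)` and `(xp α)` also converge to `xlim`. -/
theorem net_tail_inf_sup_tendsto
    {V : Type*} [NormedAddCommGroup V] [NormedSpace ℝ V]
    (K : Set V) (hclosed : IsClosed K) (hconv : Convex ℝ K)
    (hsmul : ∀ a : ℝ, 0 ≤ a → ∀ x ∈ K, a • x ∈ K)
    (hpoint : ∀ x : V, x ∈ K → -x ∈ K → x = 0)
    (hsolid : (interior K).Nonempty)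
    (c : ℝ) (hc : 0 < c)
    (hnormal : ∀ x y : V, x ∈ K → y - x ∈ K → ‖x‖ ≤ c * ‖y‖)
    -- the order induced by the cone
    (le : V → V → Prop) (hle : ∀ x y : V, le x y ↔ y - x ∈ K)
    {Λ : Type*} [Nonempty Λ] [SemilatticeSup Λ]
    (x : Λ → V) (xlim : V)
    (hx : Filter.Tendsto x Filter.atTop (nhds xlim))
    (xm xp : Λ → V)
    (hxm : ∀ α : Λ, (∀ α' : Λ, α ≤ α' → le (xm α) (x α')) ∧
      ∀ w : V, (∀ α' : Λ, α ≤ α' → le w (x α')) → le w (xm α))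
    (hxp : ∀ α : Λ, (∀ α' : Λ, α ≤ α' → le (x α') (xp α)) ∧
      ∀ w : V, (∀ α' : Λ, α ≤ α' → le (x α') w) → le (xp α) w) :
    Filter.Tendsto xm Filter.atTop (nhds xlim) ∧
    Filter.Tendsto xp Filter.atTop (nhds xlim) := by
  constructor
  · apply aux_tail_inf_tendsto K hconv hsmul hsolid c hc hnormal x xlim hx xm
    intro α
    refine ⟨fun α' hα' => (hle _ _).mp ((hxm α).1 α' hα'),
      fun w hw => (hle _ _).mp ((hxm α).2 w fun α' hα' => (hle _ _).mpr (hw α' hα'))⟩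
  · have hnx : Filter.Tendsto (fun α => -x α) Filter.atTop (nhds (-xlim)) := hx.neg
    have h := aux_tail_inf_tendsto K hconv hsmul hsolid c hc hnormal
      (fun α => -x α) (-xlim) hnx (fun α => -xp α) ?_
    · have := h.neg
      simpa using this
    · intro α
      constructor
      · intro α' hα'
        have := (hle _ _).mp ((hxp α).1 α' hα')
        have heq : -x α' - -xp α = xp α - x α' := by abel
        rwa [heq]
      · intro w hw
        have := (hle _ _).mp ((hxp α).2 (-w) (fun α' hα' => (hle _ _).mpr ?_))
        · have heq : -w - xp α = -xp α - w := by abel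
          rwa [heq] at this
        · have h2 := hw α' hα'
          have heq : -w - x α' = -x α' - w := by abel
          rwa [heq]
end

section
/- Let V be a normed space with normal cone V₊ in which the norm is monotone (0 ≤ x ≤ y ⟹ ‖x‖ ≤ ‖y‖). Then for any x, y in the same part C of V₊, ‖x − y‖ ≤ (2e^{p(x,y)} − e^{−p(x,y)} − 1) · min{‖x‖, ‖y‖}, where p is the part metric on C. Consequently, if p(x_k, u) → 0 then ‖x_k − u‖ → 0. -/
open Filter

/-- In a normed space with a normal cone `K` for which the norm is monotone
(`0 ≤ x ≤ y ⟹ ‖x‖ ≤ ‖y‖`), any two points `x, y` of the same part `C` satisfy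
`‖x - y‖ ≤ (2e^{p(x,y)} - e^{-p(x,y)} - 1)·min(‖x‖, ‖y‖)`, where `p` is the
part metric.  Consequently convergence in the part metric implies norm
convergence. -/
theorem norm_le_part_metric_bound
    {V : Type*} [NormedAddCommGroup V] [NormedSpace ℝ V]
    (K : Set V) (hclosed : IsClosed K) (hconv : Convex ℝ K)
    (hsmul : ∀ a : ℝ, 0 ≤ a → ∀ x ∈ K, a • x ∈ K)
    (hpoint : ∀ x : V, x ∈ K → -x ∈ K → x = 0)
    (hmononorm : ∀ x y : V, x ∈ K → y - x ∈ K → ‖x‖ ≤ ‖y‖)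
    -- `C` is a part of the cone `K`
    (C : Set V) (hCK : C ⊆ K)
    (hCpart : ∀ x ∈ C, ∀ y ∈ C,
      ∃ c : ℝ, 1 ≤ c ∧ y - c⁻¹ • x ∈ K ∧ c • x - y ∈ K)
    (p : V → V → ℝ)
    (hp : ∀ x y : V, p x y =
      sInf {r : ℝ | ∃ c : ℝ, 1 ≤ c ∧ y - c⁻¹ • x ∈ K ∧ c • x - y ∈ K ∧
        r = Real.log c}) :
    (∀ x ∈ C, ∀ y ∈ C,
      ‖x - y‖ ≤ (2 * Real.exp (p x y) - Real.exp (-(p x y)) - 1) *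
        min ‖x‖ ‖y‖) ∧
    (∀ u ∈ C, ∀ x : ℕ → V, (∀ k, x k ∈ C) →
      Tendsto (fun k => p (x k) u) atTop (nhds 0) →
      Tendsto (fun k => ‖x k - u‖) atTop (nhds 0)) := by
  set S : V → V → Set ℝ := fun x y =>
    {r : ℝ | ∃ c : ℝ, 1 ≤ c ∧ y - c⁻¹ • x ∈ K ∧ c • x - y ∈ K ∧
      r = Real.log c} with hSdef
  -- symmetry of the admissible set
  have hincl : ∀ x y : V, S x y ⊆ S y x := by
    rintro x y r ⟨c, hc, h1, h2, rfl⟩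
    have hc0 : (0:ℝ) < c := lt_of_lt_of_le one_pos hc
    refine ⟨c, hc, ?_, ?_, rfl⟩
    · have h := hsmul c⁻¹ (by positivity) _ h2
      have e : c⁻¹ • (c • x - y) = x - c⁻¹ • y := by
        rw [smul_sub, smul_smul, inv_mul_cancel₀ hc0.ne', one_smul]
      rwa [e] at h
    · have h := hsmul c hc0.le _ h1
      have e : c • (y - c⁻¹ • x) = c • y - x := by
        rw [smul_sub, smul_smul, mul_inv_cancel₀ hc0.ne', one_smul]
      rwa [e] at h
  have hsymm : ∀ x y : V, p x y = p y x := by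
    intro x y
    rw [hp, hp]
    exact congrArg sInf (le_antisymm (hincl x y) (hincl y x))
  have hbdd : ∀ x y : V, ∀ r ∈ S x y, (0:ℝ) ≤ r := by
    rintro x y r ⟨c, hc, -, -, rfl⟩
    exact Real.log_nonneg hc
  have hne : ∀ x ∈ C, ∀ y ∈ C, (S x y).Nonempty := by
    intro x hx y hy
    obtain ⟨c, hc, h1, h2⟩ := hCpart x hx y hy
    exact ⟨Real.log c, c, hc, h1, h2, rfl⟩
  have hpnonneg : ∀ x ∈ C, ∀ y ∈ C, 0 ≤ p x y := by
    intro x hx y hy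
    rw [hp]
    exact le_csInf (hne x hx y hy) (hbdd x y)
  -- the core bound with ‖x‖
  have hcore : ∀ x ∈ C, ∀ y ∈ C,
      ‖x - y‖ ≤ (2 * Real.exp (p x y) - Real.exp (-(p x y)) - 1) * ‖x‖ := by
    intro x hx y hy
    have key : ∀ ε > (0:ℝ), ‖x - y‖ ≤
        (2 * Real.exp (p x y + ε) - Real.exp (-(p x y + ε)) - 1) * ‖x‖ := by
      intro ε hε
      have hinf : sInf (S x y) < p x y + ε := by
        rw [← hp]; linarith
      obtain ⟨r, hr, hrlt⟩ := exists_lt_of_csInf_lt (hne x hx y hy) hinf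
      obtain ⟨c, hc, h1, h2, rfl⟩ := hr
      have hc0 : (0:ℝ) < c := lt_of_lt_of_le one_pos hc
      have hcinv : c⁻¹ ≤ 1 := by
        rw [inv_le_one_iff₀]; right; exact hc
      have hcinv0 : (0:ℝ) < c⁻¹ := by positivity
      have hcc : c * c⁻¹ = 1 := mul_inv_cancel₀ hc0.ne'
      -- c < exp (p x y + ε)
      set c' := Real.exp (p x y + ε) with hc'
      have hcc' : c ≤ c' := by
        have : c = Real.exp (Real.log c) := (Real.exp_log hc0).symm
        rw [this]
        exact (Real.exp_le_exp.mpr hrlt.le)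
      have hc'0 : (0:ℝ) < c' := Real.exp_pos _
      have hc'inv0 : (0:ℝ) < c'⁻¹ := by positivity
      have hc'c' : c' * c'⁻¹ = 1 := mul_inv_cancel₀ hc'0.ne'
      have hinvle : c'⁻¹ ≤ c⁻¹ := by gcongr
      -- the bound with c
      have hb1 : ‖y - c⁻¹ • x‖ ≤ (c - c⁻¹) * ‖x‖ := by
        have h := hmononorm (y - c⁻¹ • x) ((c - c⁻¹) • x) h1 ?_
        · rwa [norm_smul, Real.norm_of_nonneg (by linarith)] at h
        · have e : (c - c⁻¹) • x - (y - c⁻¹ • x) = c • x - y := by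
            rw [sub_smul]; abel
          rw [e]; exact h2
      have hb2 : ‖c⁻¹ • x - x‖ = (1 - c⁻¹) * ‖x‖ := by
        have e : c⁻¹ • x - x = -((1 - c⁻¹) • x) := by
          rw [sub_smul, one_smul]; abel
        rw [e, norm_neg, norm_smul, Real.norm_of_nonneg (by linarith)]
      have hsplit : ‖x - y‖ ≤ ‖y - c⁻¹ • x‖ + ‖c⁻¹ • x - x‖ := by
        have e : x - y = -(y - c⁻¹ • x) - (c⁻¹ • x - x) := by abel
        calc ‖x - y‖ = ‖-(y - c⁻¹ • x) - (c⁻¹ • x - x)‖ := by rw [e]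
          _ ≤ ‖-(y - c⁻¹ • x)‖ + ‖c⁻¹ • x - x‖ := norm_sub_le _ _
          _ = ‖y - c⁻¹ • x‖ + ‖c⁻¹ • x - x‖ := by rw [norm_neg]
      have hcoef : (c - c⁻¹) + (1 - c⁻¹) ≤ 2 * c' - c'⁻¹ - 1 := by
        nlinarith [sq_nonneg (c - 1), mul_pos hc0 hcinv0]
      have : ‖x - y‖ ≤ ((c - c⁻¹) + (1 - c⁻¹)) * ‖x‖ := by
        rw [add_mul]
        calc ‖x - y‖ ≤ ‖y - c⁻¹ • x‖ + ‖c⁻¹ • x - x‖ := hsplit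
          _ ≤ (c - c⁻¹) * ‖x‖ + (1 - c⁻¹) * ‖x‖ := by
              rw [← hb2]; exact add_le_add_left hb1 _
      calc ‖x - y‖ ≤ ((c - c⁻¹) + (1 - c⁻¹)) * ‖x‖ := this
        _ ≤ (2 * c' - c'⁻¹ - 1) * ‖x‖ :=
            mul_le_mul_of_nonneg_right hcoef (norm_nonneg _)
        _ = (2 * Real.exp (p x y + ε) - Real.exp (-(p x y + ε)) - 1) * ‖x‖ := by
            rw [hc', ← Real.exp_neg]
    have hcont : Tendsto (fun ε : ℝ =>
        (2 * Real.exp (p x y + ε) - Real.exp (-(p x y + ε)) - 1) * ‖x‖)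
        (nhdsWithin 0 (Set.Ioi 0))
        (nhds ((2 * Real.exp (p x y) - Real.exp (-(p x y)) - 1) * ‖x‖)) := by
      have hC : Continuous (fun ε : ℝ =>
          (2 * Real.exp (p x y + ε) - Real.exp (-(p x y + ε)) - 1) * ‖x‖) := by
        fun_prop
      have h0 : Tendsto (fun ε : ℝ =>
          (2 * Real.exp (p x y + ε) - Real.exp (-(p x y + ε)) - 1) * ‖x‖)
          (nhdsWithin 0 (Set.Ioi 0))
          (nhds ((2 * Real.exp (p x y + 0) - Real.exp (-(p x y + 0)) - 1) * ‖x‖)) :=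
        (hC.continuousAt (x := 0)).tendsto.mono_left nhdsWithin_le_nhds
      simpa using h0
    exact ge_of_tendsto hcont
      (eventually_nhdsWithin_of_forall fun ε hε => key ε hε)
  have main : ∀ x ∈ C, ∀ y ∈ C,
      ‖x - y‖ ≤ (2 * Real.exp (p x y) - Real.exp (-(p x y)) - 1) *
        min ‖x‖ ‖y‖ := by
    intro x hx y hy
    rcases min_cases ‖x‖ ‖y‖ with ⟨h, -⟩ | ⟨h, -⟩
    · rw [h]; exact hcore x hx y hy
    · rw [h]
      have h2 := hcore y hy x hx
      rwa [norm_sub_rev, hsymm y x] at h2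
  refine ⟨main, ?_⟩
  intro u hu x hxC htend
  have hb : ∀ k, ‖x k - u‖ ≤
      (2 * Real.exp (p (x k) u) - Real.exp (-(p (x k) u)) - 1) * ‖u‖ := by
    intro k
    have h0 := hpnonneg _ (hxC k) u hu
    have hfac : 0 ≤ 2 * Real.exp (p (x k) u) - Real.exp (-(p (x k) u)) - 1 := by
      have h1 : 1 ≤ Real.exp (p (x k) u) := Real.one_le_exp h0
      have h2 : Real.exp (-(p (x k) u)) ≤ 1 := by
        rw [← Real.exp_zero]
        exact Real.exp_le_exp.mpr (by linarith)
      linarith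
    calc ‖x k - u‖ ≤ (2 * Real.exp (p (x k) u) - Real.exp (-(p (x k) u)) - 1) *
          min ‖x k‖ ‖u‖ := main _ (hxC k) u hu
      _ ≤ (2 * Real.exp (p (x k) u) - Real.exp (-(p (x k) u)) - 1) * ‖u‖ :=
          mul_le_mul_of_nonneg_left (min_le_right _ _) hfac
  have hg : Tendsto (fun k =>
      (2 * Real.exp (p (x k) u) - Real.exp (-(p (x k) u)) - 1) * ‖u‖)
      atTop (nhds 0) := by
    have hC : Continuous (fun t : ℝ =>
        (2 * Real.exp t - Real.exp (-t) - 1) * ‖u‖) := by fun_prop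
    have h := (hC.continuousAt (x := 0)).tendsto.comp htend
    have e : (2 * Real.exp (0:ℝ) - Real.exp (-(0:ℝ)) - 1) * ‖u‖ = 0 := by norm_num
    rw [e] at h
    exact h
  exact squeeze_zero (fun k => norm_nonneg _) hb hg
end
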